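/- Let T > 0 and let φⁿ, φ ∈ C₀([0,T],ℂ) be such that φⁿ → φ uniformly on [0,T]. Suppose that for every n and every t ∈ (0,T], φⁿ(t) ∈ ℂ \ [0,∞). Then there exist a subsequence φ^{n_k} and a continuous function A: [0,T] → ℂ with A(t)² = φ(t) and Im A(t) ≥ 0 for all t ∈ [0,T], such that t ↦ √(φ^{n_k}(t)) converges uniformly on [0,T] to A. -/

import Mathlib

open MeasureTheory Set Filter

/-- The branch of the complex square root mapping `ℂ \ [0,∞)` into the open upper
half-plane; on `[0,∞)` it is the usual nonnegative real square root. -/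
noncomputable def upSqrt (z : ℂ) : ℂ :=
  if z.im = 0 ∧ 0 ≤ z.re then (Real.sqrt z.re : ℂ)
  else Complex.I * (-z) ^ ((1 : ℂ) / 2)

/-- `z ∈ ℂ \ [0,∞)`. -/
def offPosReal (z : ℂ) : Prop := ¬(z.im = 0 ∧ 0 ≤ z.re)

/-- The Cameron–Martin space `H¹₀([0,T],ℝ)`: absolutely continuous `h` with `h 0 = 0`
and derivative `dFun ∈ L²([0,T],ℝ)`, recorded via `h t = ∫₀ᵗ h'`. -/
structure CM (T : ℝ) where
  toFun : ℝ → ℝ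
  dFun : ℝ → ℝ
  measurable_dFun : Measurable dFun
  memL2 : MeasureTheory.MemLp dFun 2 (MeasureTheory.volume.restrict (Set.Ioc 0 T))
  eq_int : ∀ t ∈ Set.Icc 0 T, toFun t = ∫ s in Set.Ioc 0 t, dFun s

/-- `φ` is the solution `φ^h`: continuous on `[0,T]`, `φ 0 = 0`, valued in
`ℂ \ [0,∞)` on `(0,T]`, and `φ t = -t + 2∫₀ᵗ √(φ s) h'(s) ds`. -/
def IsPhiH (T : ℝ) (h : CM T) (φ : ℝ → ℂ) : Prop :=
  ContinuousOn φ (Set.Icc 0 T) ∧ φ 0 = 0 ∧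
  (∀ t ∈ Set.Ioc 0 T, offPosReal (φ t)) ∧
  ∀ t ∈ Set.Icc 0 T, φ t = -(t : ℂ) + 2 * ∫ s in Set.Ioc 0 t, upSqrt (φ s) * ((h.dFun s : ℝ) : ℂ)

/-- `d` is an (integrable) a.e. derivative of `φ` on `[0,T]`, i.e. `Re φ`, `Im φ` are
absolutely continuous with `φ t = ∫₀ᵗ d`. -/
def IsDensityOn (T : ℝ) (φ : ℝ → ℂ) (d : ℝ → ℂ) : Prop :=
  MeasureTheory.IntegrableOn d (Set.Ioc 0 T) ∧
  ∀ t ∈ Set.Icc 0 T, φ t = ∫ s in Set.Ioc 0 t, d s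

/-- The rate function `I(φ) = ∫₀ᵀ (φ'(t)+1)²/(8 φ(t)) dt` for `φ ∈ D([0,T],ℂ)`
(conditions (H1),(H2),(H3)), and `+∞` otherwise.  For any admissible density `d = φ'`,
the realness condition (H3) gives `(φ'+1)²/(8φ) = (Re((φ'+1)/(2√φ)))²/2`. -/
noncomputable def rateI (T : ℝ) (φ : ℝ → ℂ) : ENNReal :=
  ⨅ (d : ℝ → ℂ) (_ : IsDensityOn T φ d ∧
      (∀ t ∈ Set.Ioc 0 T, offPosReal (φ t)) ∧
      (∀ᵐ t ∂(MeasureTheory.volume.restrict (Set.Ioc 0 T)),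
        ((d t + 1) / (2 * upSqrt (φ t))).im = 0) ∧
      MeasureTheory.MemLp (fun t => ((d t + 1) / (2 * upSqrt (φ t))).re) 2
        (MeasureTheory.volume.restrict (Set.Ioc 0 T))),
    ∫⁻ t in Set.Ioc 0 T, ENNReal.ofReal ((((d t + 1) / (2 * upSqrt (φ t))).re) ^ 2 / 2)

/-- Riemann–Stieltjes integral `∫₀ᵀ f da` in its integration-by-parts form
`f(T)a(T) - ∫₀ᵀ a(r) f'(r) dr` (for `a 0 = 0`). -/
noncomputable def RSint (T : ℝ) (f a : ℝ → ℝ) : ℝ :=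
  f T * a T - ∫ r in Set.Ioc 0 T, a r * deriv f r

/-- The functional `J_{f,g}(ξ)`. -/
noncomputable def Jfun (T : ℝ) (f g : ℝ → ℝ) (ξ : ℝ → ℂ) : ℝ :=
  (1 / 2) * (RSint T f (fun r => (ξ r).re + r) + RSint T g (fun r => (ξ r).im)) -
    (1 / 2) * ∫ r in Set.Ioc 0 T,
      (f r ^ 2 * (‖ξ r‖ + (ξ r).re) / 2 +
        g r ^ 2 * (‖ξ r‖ - (ξ r).re) / 2 + f r * g r * (ξ r).im)

lemma my_re_cpow_half_nonneg (w : ℂ) : 0 ≤ (w ^ ((1:ℂ)/2)).re := by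
  rcases eq_or_ne w 0 with rfl | hw
  · rw [Complex.zero_cpow (by norm_num)]; simp
  · rw [Complex.cpow_def_of_ne_zero hw, Complex.exp_re]
    apply mul_nonneg (Real.exp_nonneg _)
    apply Real.cos_nonneg_of_mem_Icc
    have h1 := Complex.neg_pi_lt_arg w
    have h2 := Complex.arg_le_pi w
    have h3 : (Complex.log w * ((1:ℂ)/2)).im = w.arg * (1/2) := by
      rw [show (1:ℂ)/2 = ((1/2:ℝ):ℂ) by norm_num]
      simp [Complex.mul_im, Complex.log_im]
    rw [h3]
    constructor <;> [linarith; linarith]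

lemma upSqrt_sq (z : ℂ) : upSqrt z ^ 2 = z := by
  unfold upSqrt
  split_ifs with h
  · rw [← Complex.ofReal_pow, Real.sq_sqrt h.2]
    exact Complex.ext (by simp) (by simp [h.1])
  · have h2 : ((-z) ^ ((1:ℂ)/2)) ^ (2:ℕ) = -z := by
      rw [show (1:ℂ)/2 = ((2:ℕ):ℂ)⁻¹ by push_cast; norm_num]
      exact Complex.cpow_nat_inv_pow _ two_ne_zero
    calc (Complex.I * (-z) ^ ((1:ℂ)/2)) ^ 2
        = Complex.I ^ 2 * ((-z) ^ ((1:ℂ)/2)) ^ (2:ℕ) := by ring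
      _ = z := by rw [Complex.I_sq, h2]; ring

lemma upSqrt_im_nonneg (z : ℂ) : 0 ≤ (upSqrt z).im := by
  unfold upSqrt
  split_ifs with h
  · simp
  · rw [Complex.mul_im]
    simpa [Complex.I_re, Complex.I_im] using my_re_cpow_half_nonneg (-z)

lemma upSqrt_eq_branch (z : ℂ) (h : z = 0 ∨ offPosReal z) :
    upSqrt z = Complex.I * (-z) ^ ((1:ℂ)/2) := by
  rcases h with rfl | h
  · unfold upSqrt
    rw [if_pos (by simp)]
    simp [Complex.zero_cpow (show ((1:ℂ)/2) ≠ 0 by norm_num)]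
  · unfold upSqrt
    rw [if_neg h]

lemma continuousAt_branch (z : ℂ) (h : z = 0 ∨ offPosReal z) :
    ContinuousAt (fun w : ℂ => Complex.I * (-w) ^ ((1:ℂ)/2)) z := by
  have hc : ContinuousAt (fun x : ℂ => x ^ ((1:ℂ)/2)) (-z) := by
    apply Complex.continuousAt_cpow_const_of_re_pos
    · rcases h with rfl | h
      · left; simp
      · rcases not_and_or.mp h with h | h
        · right; simpa using h
        · left; push_neg at h; rw [Complex.neg_re]; linarith
    · rw [show (1:ℂ)/2 = ((1/2:ℝ):ℂ) by norm_num, Complex.ofReal_re]; norm_num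
  exact continuousAt_const.mul (hc.comp continuous_neg.continuousAt)

lemma sqrt_mod {f : ℝ → ℂ} {s t ε : ℝ} (hst : s ≤ t) (hf : ContinuousOn f (Set.Icc s t))
    (hε : 0 < ε) (hb : ∀ r ∈ Set.Icc s t, ‖f r ^ 2 - f s ^ 2‖ ≤ ε ^ 2) :
    ‖f t - f s‖ ≤ 3 * ε := by
  have hsmem : s ∈ Set.Icc s t := ⟨le_refl s, hst⟩
  have htmem : t ∈ Set.Icc s t := ⟨hst, le_refl t⟩
  by_cases hc : ‖f s‖ ≤ ε
  · have e1 : ‖f t ^ 2‖ ≤ ε ^ 2 + ‖f s ^ 2‖ := by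
      calc ‖f t ^ 2‖ = ‖(f t ^ 2 - f s ^ 2) + f s ^ 2‖ := by ring_nf
        _ ≤ ‖f t ^ 2 - f s ^ 2‖ + ‖f s ^ 2‖ := norm_add_le _ _
        _ ≤ ε ^ 2 + ‖f s ^ 2‖ := by linarith [hb t htmem]
    rw [norm_pow, norm_pow] at e1
    have e2 : ‖f t‖ ≤ 2 * ε := by
      nlinarith [norm_nonneg (f t), norm_nonneg (f s)]
    have e3 : ‖f t - f s‖ ≤ ‖f t‖ + ‖f s‖ := by
      simpa [sub_eq_add_neg] using norm_add_le (f t) (-(f s))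
    linarith
  · push_neg at hc
    have strict : ∀ r ∈ Set.Icc s t, ‖f r - f s‖ ≤ ε →
        ‖f r - f s‖ < ε := by
      intro r hr hle
      have hmul : ‖f r - f s‖ * ‖f r + f s‖ ≤ ε ^ 2 := by
        rw [← norm_mul, show (f r - f s) * (f r + f s) = f r ^ 2 - f s ^ 2 by ring]
        exact hb r hr
      have hplus : ε < ‖f r + f s‖ := by
        have t1 : ‖2 * f s‖ ≤ ‖f r + f s‖ + ‖f r - f s‖ := by
          calc ‖2 * f s‖ = ‖(f r + f s) + (f s - f r)‖ := by ring_nf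
            _ ≤ ‖f r + f s‖ + ‖f s - f r‖ := norm_add_le _ _
            _ = ‖f r + f s‖ + ‖f r - f s‖ := by
                rw [norm_sub_rev]
        have t2 : ‖2 * f s‖ = 2 * ‖f s‖ := by
          rw [norm_mul, Complex.norm_two]
        linarith
      rcases (norm_nonneg (f r - f s)).eq_or_lt with h0 | h0
      · linarith
      · have : ‖f r - f s‖ * ε < ε * ε := by
          calc ‖f r - f s‖ * ε < ‖f r - f s‖ * ‖f r + f s‖ :=
            (mul_lt_mul_iff_right₀ h0).mpr hplus
          _ ≤ ε ^ 2 := hmul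
          _ = ε * ε := sq ε
        exact (mul_lt_mul_iff_left₀ hε).mp this
    set S := Set.Icc s t ∩ (fun r => f r - f s) ⁻¹' Metric.closedBall 0 ε with hS
    have hmemS : ∀ r, r ∈ S ↔ r ∈ Set.Icc s t ∧ ‖f r - f s‖ ≤ ε := by
      intro r
      simp [hS, Metric.mem_closedBall, Complex.dist_eq]
    have hclosed : IsClosed S :=
      ContinuousOn.preimage_isClosed_of_isClosed (hf.sub continuousOn_const) isClosed_Icc
        Metric.isClosed_closedBall
    have hne : S.Nonempty := ⟨s, (hmemS s).2 ⟨hsmem, by simp [hε.le]⟩⟩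
    have hbdd : BddAbove S := ⟨t, fun r hr => ((hmemS r).1 hr).1.2⟩
    set m := sSup S with hm
    have hmS : m ∈ S := hclosed.csSup_mem hne hbdd
    obtain ⟨hmIcc, hmle⟩ := (hmemS m).1 hmS
    rcases hmIcc.2.eq_or_lt with heq | hlt
    · rw [← heq]; linarith
    · exfalso
      have hstrict := strict m hmIcc hmle
      have hev : ∀ᶠ r in nhdsWithin m (Set.Icc s t), ‖f r - f s‖ < ε := by
        have hcw : ContinuousWithinAt (fun r => ‖f r - f s‖) (Set.Icc s t) m :=
          continuous_norm.continuousAt.comp_continuousWithinAt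
            ((hf m hmIcc).sub continuousWithinAt_const)
        exact hcw.eventually_lt_const hstrict
      have hev2 : ∀ᶠ r in nhdsWithin m (Set.Ioi m), ‖f r - f s‖ < ε := by
        rw [← nhdsWithin_Ioc_eq_nhdsGT hlt]
        refine (nhdsWithin_mono m (fun r hr => ?_)) hev
        rcases Set.mem_Ioc.mp hr with ⟨h1, h2⟩
        exact Set.mem_Icc.mpr ⟨hmIcc.1.trans h1.le, h2⟩
      have hev3 : ∀ᶠ r in nhdsWithin m (Set.Ioi m), r ∈ Set.Ioc m t :=
        Filter.eventually_mem_set.mpr (Ioc_mem_nhdsGT hlt)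
      obtain ⟨r, hr1, hr2⟩ := (hev2.and hev3).exists
      have hrS : r ∈ S := (hmemS r).2 ⟨⟨hmIcc.1.trans hr2.1.le, hr2.2⟩, hr1.le⟩
      have : r ≤ m := le_csSup hbdd hrS
      linarith [hr2.1]

set_option maxHeartbeats 1000000 in
set_option synthInstance.maxHeartbeats 1000000 in
/-- If `φⁿ → φ` uniformly on `[0,T]`, all in `C₀([0,T],ℂ)` with
`φⁿ(t) ∈ ℂ \ [0,∞)` on `(0,T]`, then along a subsequence `√(φ^{n_k})` converges
uniformly to a (continuous) branch square root `A` of `φ`. -/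
theorem stmt4 (T : ℝ) (hT : 0 < T) (φn : ℕ → ℝ → ℂ) (φ : ℝ → ℂ)
    (hnc : ∀ n, ContinuousOn (φn n) (Set.Icc 0 T)) (hn0 : ∀ n, φn n 0 = 0)
    (hφc : ContinuousOn φ (Set.Icc 0 T)) (hφ0 : φ 0 = 0)
    (hconv : TendstoUniformlyOn φn φ Filter.atTop (Set.Icc 0 T))
    (hoff : ∀ n, ∀ t ∈ Set.Ioc 0 T, offPosReal (φn n t)) :
    ∃ (k : ℕ → ℕ) (A : ℝ → ℂ), StrictMono k ∧
      ContinuousOn A (Set.Icc 0 T) ∧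
      (∀ t ∈ Set.Icc 0 T, A t ^ 2 = φ t ∧ 0 ≤ (A t).im) ∧
      TendstoUniformlyOn (fun j t => upSqrt (φn (k j) t)) A Filter.atTop (Set.Icc 0 T) := by
  -- a uniform bound on all the `φn`
  obtain ⟨C, hC⟩ := isCompact_Icc.exists_bound_of_continuousOn hφc
  obtain ⟨N1, hN1⟩ := Filter.eventually_atTop.mp (Metric.tendstoUniformlyOn_iff.mp hconv 1 one_pos)
  have hfinB : ∀ N : ℕ, ∃ M : ℝ, ∀ n < N, ∀ t ∈ Set.Icc (0:ℝ) T, ‖φn n t‖ ≤ M := by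
    intro N
    induction N with
    | zero => exact ⟨0, fun n hn => absurd hn (Nat.not_lt_zero n)⟩
    | succ N ih =>
      obtain ⟨M, hM⟩ := ih
      obtain ⟨B, hB⟩ := isCompact_Icc.exists_bound_of_continuousOn (hnc N)
      refine ⟨max M B, fun n hn t ht => ?_⟩
      rcases Nat.lt_succ_iff_lt_or_eq.mp hn with h | rfl
      · exact le_max_of_le_left (hM n h t ht)
      · exact le_max_of_le_right (by simpa using hB t ht)
  obtain ⟨M0, hM0⟩ := hfinB N1
  set M : ℝ := max 0 (max (C + 1) M0) with hMdef
  have hM : ∀ n, ∀ t ∈ Set.Icc (0:ℝ) T, ‖φn n t‖ ≤ M := by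
    intro n t ht
    rcases lt_or_ge n N1 with h | h
    · exact (hM0 n h t ht).trans (le_max_of_le_right (le_max_right _ _))
    · have h1 := hN1 n h t ht
      have e2 : ‖φn n t‖ ≤ ‖φ t‖ + dist (φ t) (φn n t) := by
        rw [dist_comm, dist_eq_norm]
        calc ‖φn n t‖ = ‖φ t + (φn n t - φ t)‖ := by ring_nf
          _ ≤ ‖φ t‖ + ‖φn n t - φ t‖ := norm_add_le _ _
      have : ‖φn n t‖ ≤ C + 1 := by
        have := hC t ht; linarith
      exact this.trans (le_max_of_le_right (le_max_left _ _))
  -- uniform equicontinuity of the family `φn`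
  have hUC : ∀ g : ℝ → ℂ, ContinuousOn g (Set.Icc 0 T) → ∀ ε > (0:ℝ), ∃ δ > (0:ℝ),
      ∀ u ∈ Set.Icc (0:ℝ) T, ∀ v ∈ Set.Icc (0:ℝ) T, dist u v < δ → dist (g u) (g v) < ε := by
    intro g hg ε hε
    exact Metric.uniformContinuousOn_iff.mp
      (isCompact_Icc.uniformContinuousOn_of_continuous hg) ε hε
  have hEq : ∀ ε > (0:ℝ), ∃ δ > (0:ℝ), ∀ n, ∀ u ∈ Set.Icc (0:ℝ) T, ∀ v ∈ Set.Icc (0:ℝ) T,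
      dist u v < δ → dist (φn n u) (φn n v) ≤ ε := by
    intro ε hε
    obtain ⟨N, hN⟩ := Filter.eventually_atTop.mp
      (Metric.tendstoUniformlyOn_iff.mp hconv (ε / 3) (by linarith))
    obtain ⟨δ1, hδ1, h1⟩ := hUC φ hφc (ε / 3) (by linarith)
    have hfin : ∀ K : ℕ, ∃ δ > (0:ℝ), ∀ n < K, ∀ u ∈ Set.Icc (0:ℝ) T, ∀ v ∈ Set.Icc (0:ℝ) T,
        dist u v < δ → dist (φn n u) (φn n v) ≤ ε := by
      intro K
      induction K with
      | zero => exact ⟨1, one_pos, fun n hn => absurd hn (Nat.not_lt_zero n)⟩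
      | succ K ih =>
        obtain ⟨δ0, hδ0, h0⟩ := ih
        obtain ⟨δ2, hδ2, h2⟩ := hUC (φn K) (hnc K) ε hε
        refine ⟨min δ0 δ2, lt_min hδ0 hδ2, fun n hn u hu v hv hd => ?_⟩
        rcases Nat.lt_succ_iff_lt_or_eq.mp hn with h | rfl
        · exact h0 n h u hu v hv (hd.trans_le (min_le_left _ _))
        · exact (h2 u hu v hv (hd.trans_le (min_le_right _ _))).le
    obtain ⟨δ0, hδ0, h0⟩ := hfin N
    refine ⟨min δ1 δ0, lt_min hδ1 hδ0, fun n u hu v hv hd => ?_⟩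
    rcases lt_or_ge n N with h | h
    · exact h0 n h u hu v hv (hd.trans_le (min_le_right _ _))
    · have d1 := hN n h u hu
      have d2 := hN n h v hv
      have d3 := h1 u hu v hv (hd.trans_le (min_le_left _ _))
      calc dist (φn n u) (φn n v)
          ≤ dist (φn n u) (φ u) + dist (φ u) (φ v) + dist (φ v) (φn n v) :=
            dist_triangle4 _ _ _ _
        _ ≤ ε := by rw [dist_comm (φn n u) (φ u)]; linarith
  -- continuity of the square roots
  have hzero : ∀ n, ∀ r ∈ Set.Icc (0:ℝ) T, φn n r = 0 ∨ offPosReal (φn n r) := by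
    intro n r hr
    rcases eq_or_lt_of_le hr.1 with h0 | h0
    · left; rw [← h0]; exact hn0 n
    · right; exact hoff n r ⟨h0, hr.2⟩
  have hfc : ∀ n, ContinuousOn (fun t => upSqrt (φn n t)) (Set.Icc 0 T) := by
    intro n t ht
    have hca := continuousAt_branch _ (hzero n t ht)
    have h1 : ContinuousWithinAt (fun r => Complex.I * (-(φn n r)) ^ ((1:ℂ)/2))
        (Set.Icc 0 T) t := hca.comp_continuousWithinAt (hnc n t ht)
    exact h1.congr (fun r hr => upSqrt_eq_branch _ (hzero n r hr))
      (upSqrt_eq_branch _ (hzero n t ht))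
  haveI : CompactSpace (Set.Icc (0:ℝ) T) := isCompact_iff_compactSpace.mp isCompact_Icc
  let F : ℕ → BoundedContinuousFunction (Set.Icc (0:ℝ) T) ℂ := fun n =>
    BoundedContinuousFunction.mkOfCompact
      ⟨(Set.Icc (0:ℝ) T).restrict (fun t => upSqrt (φn n t)), (hfc n).restrict⟩
  have hFapp : ∀ n (x : Set.Icc (0:ℝ) T), F n x = upSqrt (φn n x) := fun n x => rfl
  have h_in : ∀ (f : BoundedContinuousFunction (Set.Icc (0:ℝ) T) ℂ) (x : Set.Icc (0:ℝ) T),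
      f ∈ Set.range F → f x ∈ Metric.closedBall (0:ℂ) (Real.sqrt M) := by
    rintro f x ⟨n, rfl⟩
    rw [Metric.mem_closedBall, hFapp]
    have h1 : ‖upSqrt (φn n x)‖ ^ 2 ≤ M := by
      rw [← norm_pow, upSqrt_sq]; exact hM n x x.2
    have h2 : dist (upSqrt (φn n x)) (0:ℂ) = ‖upSqrt (φn n x)‖ := by
      simp [Complex.dist_eq]
    rw [h2]
    have h3 := Real.sqrt_le_sqrt h1
    rwa [Real.sqrt_sq (norm_nonneg _)] at h3
  have hEquiF : Equicontinuous ((↑) : (Set.range F) → (Set.Icc (0:ℝ) T) → ℂ) := by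
    intro x
    rw [Metric.equicontinuousAt_iff]
    intro ε hε
    obtain ⟨δ, hδ, hδ'⟩ := hEq ((ε / 4) ^ 2) (by positivity)
    refine ⟨δ, hδ, fun y hy i => ?_⟩
    obtain ⟨n, hn⟩ := i.2
    have key : ∀ u v : Set.Icc (0:ℝ) T, (u:ℝ) ≤ v → dist (u:ℝ) (v:ℝ) < δ →
        ‖upSqrt (φn n (v:ℝ)) - upSqrt (φn n (u:ℝ))‖ ≤ 3 * (ε / 4) := by
      intro u v huv hd
      apply sqrt_mod (f := fun r => upSqrt (φn n r)) huv
        ((hfc n).mono (Set.Icc_subset_Icc u.2.1 v.2.2)) (by linarith)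
      intro r hr
      rw [upSqrt_sq, upSqrt_sq, ← Complex.dist_eq]
      have hrI : r ∈ Set.Icc (0:ℝ) T := ⟨u.2.1.trans hr.1, hr.2.trans v.2.2⟩
      have hdru : dist r (u:ℝ) < δ := by
        rw [Real.dist_eq] at hd ⊢
        rw [abs_of_nonneg (sub_nonneg.mpr hr.1)]
        calc r - (u:ℝ) ≤ (v:ℝ) - u := by linarith [hr.2]
          _ ≤ |(u:ℝ) - v| := by rw [abs_sub_comm]; exact le_abs_self _
          _ < δ := hd
      exact hδ' n r hrI u u.2 hdru
    have hd' : dist (x:ℝ) (y:ℝ) < δ := by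
      rw [← Subtype.dist_eq]; rw [dist_comm]; exact hy
    have goal' : dist (F n x) (F n y) < ε := by
      rw [hFapp, hFapp, Complex.dist_eq]
      rcases le_total (x:ℝ) (y:ℝ) with hle | hle
      · have := key x y hle hd'
        rw [norm_sub_rev]
        linarith
      · have := key y x hle (by rwa [dist_comm])
        linarith
    rw [← hn]
    exact goal'
  have hcpt := BoundedContinuousFunction.arzela_ascoli
    (Metric.closedBall (0:ℂ) (Real.sqrt M)) (isCompact_closedBall _ _)
    (Set.range F) h_in hEquiF
  obtain ⟨a, -, k, hk, hak⟩ :=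
    hcpt.tendsto_subseq (x := F) (fun n => subset_closure (Set.mem_range_self n))
  set A : ℝ → ℂ := fun t => a (Set.projIcc 0 T hT.le t) with hA
  have hAeq : ∀ t (ht : t ∈ Set.Icc (0:ℝ) T), A t = a ⟨t, ht⟩ := by
    intro t ht
    simp only [hA]
    rw [Set.projIcc_of_mem hT.le ht]
  have hTU : TendstoUniformlyOn (fun j t => upSqrt (φn (k j) t)) A Filter.atTop
      (Set.Icc 0 T) := by
    rw [Metric.tendstoUniformlyOn_iff]
    intro ε hε
    filter_upwards [(Metric.tendsto_nhds.mp hak) ε hε] with j hj t ht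
    have e1 : A t = a ⟨t, ht⟩ := hAeq t ht
    have e2 : upSqrt (φn (k j) t) = F (k j) ⟨t, ht⟩ := rfl
    rw [e1, e2]
    calc dist (a ⟨t, ht⟩) (F (k j) ⟨t, ht⟩) ≤ dist a (F (k j)) :=
        BoundedContinuousFunction.dist_coe_le_dist _
      _ < ε := by rw [dist_comm]; exact hj
  refine ⟨k, A, hk, (a.continuous.comp continuous_projIcc).continuousOn, ?_, hTU⟩
  intro t ht
  have h1 : Filter.Tendsto (fun j => upSqrt (φn (k j) t)) Filter.atTop (nhds (A t)) :=
    hTU.tendsto_at ht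
  constructor
  · have h2 : Filter.Tendsto (fun j => φn (k j) t) Filter.atTop (nhds (φ t)) :=
      (hconv.tendsto_at ht).comp hk.tendsto_atTop
    have h3 : Filter.Tendsto (fun j => upSqrt (φn (k j) t) ^ 2) Filter.atTop
        (nhds (A t ^ 2)) := h1.pow 2
    have h4 : (fun j => upSqrt (φn (k j) t) ^ 2) = fun j => φn (k j) t := by
      funext j; exact upSqrt_sq _
    rw [h4] at h3
    exact tendsto_nhds_unique h3 h2
  · have h5 : Filter.Tendsto (fun j => (upSqrt (φn (k j) t)).im) Filter.atTop
        (nhds (A t).im) := (Complex.continuous_im.tendsto _).comp h1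
    exact ge_of_tendsto' h5 (fun j => upSqrt_im_nonneg _)
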